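/- arXiv:2407.19366 — 3 statements merged into one kernel-verified Lean document; each statement's English description precedes it below -/
import Mathlib

section
/- Let d ≥ 2, a < 0, a_c = (d-2)/2, and let b_FS(a) = d(a_c - a)/(2√((a_c-a)² + (d-1))) + a - a_c. If b = b_FS(a) and p = (d + 2(1+a-b))/(d - 2(1+a-b)), then (a_c - a)² = 4(d-1)/((p+1)² - 4). -/
/-- On the Felli–Schneider curve `b = b_FS(a)` one has the algebraic identity
`(a_c - a)² = 4(d-1)/((p+1)² - 4)`. -/
theorem stmt2 (d : ℕ) (hd : 2 ≤ d) (a b p : ℝ) (ha : a < 0)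
    (hb : b = (d : ℝ) * (((d : ℝ) - 2) / 2 - a) /
        (2 * Real.sqrt ((((d : ℝ) - 2) / 2 - a) ^ 2 + ((d : ℝ) - 1))) + a - ((d : ℝ) - 2) / 2)
    (hp : p = ((d : ℝ) + 2 * (1 + a - b)) / ((d : ℝ) - 2 * (1 + a - b))) :
    (((d : ℝ) - 2) / 2 - a) ^ 2 = 4 * ((d : ℝ) - 1) / ((p + 1) ^ 2 - 4) := by
  have hd2 : (2:ℝ) ≤ (d:ℝ) := by exact_mod_cast hd
  set t : ℝ := ((d : ℝ) - 2) / 2 - a with ht_def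
  have ht : 0 < t := by
    simp only [ht_def]
    linarith
  set s : ℝ := Real.sqrt (t ^ 2 + ((d : ℝ) - 1)) with hs_def
  have hpos : (0:ℝ) < t ^ 2 + ((d:ℝ) - 1) := by nlinarith
  have hs : 0 < s := Real.sqrt_pos.mpr hpos
  have hs2 : s ^ 2 = t ^ 2 + ((d:ℝ) - 1) := Real.sq_sqrt hpos.le
  have hst : t < s := by nlinarith
  have hden : (d : ℝ) - 2 * (1 + a - b) = (d : ℝ) * t / s := by
    rw [hb]; field_simp; ring
  have hd0 : (0:ℝ) < (d:ℝ) := by linarith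
  have hp1 : p + 1 = 2 * s / t := by
    rw [hp, hden, hb]
    have h1 : (d:ℝ) * t / s ≠ 0 := by positivity
    field_simp
    ring
  rw [hp1]
  have hd1 : (0:ℝ) < (d:ℝ) - 1 := by linarith
  have hkey : (2 * s / t) ^ 2 - 4 = 4 * ((d:ℝ) - 1) / t ^ 2 := by
    field_simp; nlinarith
  rw [hkey]
  field_simp
end

section
/- Let d ≥ 2, a < 0, and suppose Λ := (a_c-a)² = 4(d-1)/((p+1)²-4) with p > 1 (the Felli–Schneider degenerate case). Let Ψ(t) = ((p+1)Λ/2)^{1/(p-1)} (cosh(√Λ(p-1)t/2))^{-2/(p-1)} and let θ_l be a standard degree-one spherical harmonic on S^{d-1} (i.e. a coordinate function restricted to the sphere, satisfying -Δ_θ θ_l = (d-1) θ_l). Then w(t,θ) = Ψ(t)^{(p+1)/2} θ_l satisfies -Δ_θ w - ∂_t² w + Λ w = p Ψ^{p-1} w on the cylinder ℝ × S^{d-1}. -/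
/-- The Laplace–Beltrami operator on the unit sphere of `ℝ^d`, computed via the
degree-zero homogeneous extension: `Δ_θ f (θ) = Δ_{ℝ^d} (x ↦ f(x/‖x‖)) (θ)`. -/
noncomputable def sphereLaplacian {d : ℕ} (f : EuclideanSpace ℝ (Fin d) → ℝ)
    (θ : EuclideanSpace ℝ (Fin d)) : ℝ :=
  ∑ i : Fin d, iteratedFDeriv ℝ 2 (fun x => f (‖x‖⁻¹ • x)) θ
    ![EuclideanSpace.single i 1, EuclideanSpace.single i 1]

lemma sphereLaplacian_const_mul {d : ℕ} (Θ : EuclideanSpace ℝ (Fin d) → ℝ) (c : ℝ)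
    (θ : EuclideanSpace ℝ (Fin d))
    (hg : ContDiffOn ℝ 2 (fun x => Θ (‖x‖⁻¹ • x)) (Metric.ball θ (1/2))) :
    sphereLaplacian (fun x => c * Θ x) θ = c * sphereLaplacian Θ θ := by
  unfold sphereLaplacian
  rw [Finset.mul_sum]
  refine Finset.sum_congr rfl fun i _ => ?_
  have hθB : θ ∈ Metric.ball θ (1/2) := Metric.mem_ball_self (by norm_num)
  have key : iteratedFDeriv ℝ 2 (fun x => c * Θ (‖x‖⁻¹ • x)) θ
      = c • iteratedFDeriv ℝ 2 (fun x => Θ (‖x‖⁻¹ • x)) θ := by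
    rw [← iteratedFDerivWithin_of_isOpen (f := fun x => c * Θ (‖x‖⁻¹ • x)) 2
          Metric.isOpen_ball hθB,
        ← iteratedFDerivWithin_of_isOpen (f := fun x => Θ (‖x‖⁻¹ • x)) 2
          Metric.isOpen_ball hθB,
        show (fun x => c * Θ (‖x‖⁻¹ • x)) = c • (fun x => Θ (‖x‖⁻¹ • x)) from rfl,
        iteratedFDerivWithin_const_smul_apply (hg θ hθB) Metric.isOpen_ball.uniqueDiffOn hθB]
  rw [key]
  simp

lemma coord_contDiffOn {d : ℕ} (l : Fin d) (θ : EuclideanSpace ℝ (Fin d)) (hθ : ‖θ‖ = 1) :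
    ContDiffOn ℝ 2 (fun x : EuclideanSpace ℝ (Fin d) => (‖x‖⁻¹ • x) l)
      (Metric.ball θ (1/2)) := by
  intro x hx
  have hx0 : x ≠ 0 := by
    intro h
    rw [Metric.mem_ball, h, dist_zero_left, hθ] at hx
    norm_num at hx
  have h1 : ContDiffAt ℝ 2 (fun x : EuclideanSpace ℝ (Fin d) => ‖x‖⁻¹ • x) x :=
    ((contDiffAt_norm (𝕜 := ℝ) hx0).inv (norm_ne_zero_iff.2 hx0)).smul contDiffAt_id
  have h2 : ContDiff ℝ 2 (fun x : EuclideanSpace ℝ (Fin d) => x l) :=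
    contDiff_euclidean.mp contDiff_id l
  exact (h2.contDiffAt.comp x h1).contDiffWithinAt

/-- In the degenerate Felli–Schneider case, `w(t,θ) = Ψ(t)^{(p+1)/2} θ_l` solves the
linearized equation `-Δ_θ w - ∂_t² w + Λ w = p Ψ^{p-1} w` on the cylinder. -/
theorem stmt3 (d : ℕ) (hd : 2 ≤ d) (a Λ p : ℝ) (ha : a < 0) (hp : 1 < p)
    (hΛ : Λ = (((d : ℝ) - 2) / 2 - a) ^ 2)
    (hFS : Λ = 4 * ((d : ℝ) - 1) / ((p + 1) ^ 2 - 4))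
    (l : Fin d) (Θ : EuclideanSpace ℝ (Fin d) → ℝ) (hΘ : Θ = fun x => x l)
    (heig : ∀ θ ∈ Metric.sphere (0 : EuclideanSpace ℝ (Fin d)) 1,
      -sphereLaplacian Θ θ = ((d : ℝ) - 1) * Θ θ)
    (Ψ : ℝ → ℝ)
    (hΨ : Ψ = fun t => ((p + 1) * Λ / 2) ^ (1 / (p - 1)) *
      Real.cosh (Real.sqrt Λ * (p - 1) * t / 2) ^ (-(2 / (p - 1))))
    (w : ℝ → EuclideanSpace ℝ (Fin d) → ℝ)
    (hw : w = fun t θ => Ψ t ^ ((p + 1) / 2) * Θ θ) :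
    ∀ t : ℝ, ∀ θ ∈ Metric.sphere (0 : EuclideanSpace ℝ (Fin d)) 1,
      -sphereLaplacian (w t) θ - deriv (deriv fun s => w s θ) t + Λ * w t θ =
        p * Ψ t ^ (p - 1) * w t θ := by
  intro t θ hθ
  have hθ1 : ‖θ‖ = 1 := by simpa using hθ
  -- basic positivity
  have hp1 : (0:ℝ) < p - 1 := by linarith
  have hden : (0:ℝ) < (p + 1) ^ 2 - 4 := by nlinarith
  have hdr : (2:ℝ) ≤ (d:ℝ) := by exact_mod_cast hd
  have hΛpos : 0 < Λ := by
    rw [hFS]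
    apply div_pos (by linarith) hden
  have hsq : Real.sqrt Λ * Real.sqrt Λ = Λ := Real.mul_self_sqrt hΛpos.le
  set b : ℝ := Real.sqrt Λ * (p - 1) / 2 with hb
  set A : ℝ := ((p + 1) * Λ / 2) ^ (1 / (p - 1)) with hA
  have hApos : 0 < A := Real.rpow_pos_of_pos (by positivity) _
  set E : ℝ := -((p + 1) / (p - 1)) with hE
  set C : ℝ := A ^ ((p + 1) / 2) with hC
  have hCpos : 0 < C := Real.rpow_pos_of_pos hApos _
  have hcosh : ∀ s : ℝ, 0 < Real.cosh (b * s) := fun s => Real.cosh_pos _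
  have harg : ∀ s : ℝ, Real.sqrt Λ * (p - 1) * s / 2 = b * s := fun s => by rw [hb]; ring
  have hΨs : ∀ s : ℝ, Ψ s = A * Real.cosh (b * s) ^ (-(2 / (p - 1))) := by
    intro s
    rw [hΨ]
    simp only
    rw [harg s]
  have hφs : ∀ s : ℝ, Ψ s ^ ((p + 1) / 2) = C * Real.cosh (b * s) ^ E := by
    intro s
    rw [hΨs s, Real.mul_rpow hApos.le (Real.rpow_nonneg (hcosh s).le _),
        ← Real.rpow_mul (hcosh s).le,
        show -(2 / (p - 1)) * ((p + 1) / 2) = E by rw [hE]; field_simp]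
  have hws : ∀ s : ℝ, w s θ = C * Real.cosh (b * s) ^ E * Θ θ := by
    intro s
    rw [hw]
    simp only
    rw [hφs s]
  -- derivative machinery
  have hbd : ∀ s : ℝ, HasDerivAt (fun u : ℝ => b * u) b s := by
    intro s
    simpa using (hasDerivAt_id s).const_mul b
  have hcd : ∀ s : ℝ, HasDerivAt (fun u : ℝ => Real.cosh (b * u)) (Real.sinh (b * s) * b) s :=
    fun s => (hbd s).cosh
  have hder1 : (deriv fun s => w s θ)
      = fun s => (C * E * b * Θ θ) * (Real.cosh (b * s) ^ (E - 1) * Real.sinh (b * s)) := by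
    funext s
    have h1 : HasDerivAt (fun u : ℝ => C * Real.cosh (b * u) ^ E * Θ θ)
        ((Real.sinh (b * s) * b) * E * Real.cosh (b * s) ^ (E - 1) * C * Θ θ) s := by
      have := (((hcd s).rpow_const (p := E) (Or.inl (hcosh s).ne')).const_mul C).mul_const (Θ θ)
      refine this.congr_deriv ?_
      ring
    rw [show (fun s => w s θ) = fun s => C * Real.cosh (b * s) ^ E * Θ θ from funext hws]
    rw [h1.deriv]
    ring
  have h2nd : HasDerivAt
      (fun s => (C * E * b * Θ θ) * (Real.cosh (b * s) ^ (E - 1) * Real.sinh (b * s)))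
      ((C * E * b * Θ θ) *
        ((Real.sinh (b * t) * b * (E - 1) * Real.cosh (b * t) ^ (E - 1 - 1)) * Real.sinh (b * t)
          + Real.cosh (b * t) ^ (E - 1) * (Real.cosh (b * t) * b))) t := by
    exact (((hcd t).rpow_const (p := E - 1) (Or.inl (hcosh t).ne')).mul ((hbd t).sinh)).const_mul _
  have hderiv2 : deriv (deriv fun s => w s θ) t
      = (C * E * b * Θ θ) *
        ((Real.sinh (b * t) * b * (E - 1) * Real.cosh (b * t) ^ (E - 1 - 1)) * Real.sinh (b * t)
          + Real.cosh (b * t) ^ (E - 1) * (Real.cosh (b * t) * b)) := by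
    rw [hder1]
    exact h2nd.deriv
  -- spatial part
  have hlap : sphereLaplacian (w t) θ = (Ψ t ^ ((p + 1) / 2)) * sphereLaplacian Θ θ := by
    rw [show w t = fun x => (Ψ t ^ ((p + 1) / 2)) * Θ x from by rw [hw]]
    refine sphereLaplacian_const_mul Θ _ θ ?_
    rw [hΘ]
    exact coord_contDiffOn l θ hθ1
  have hlapΘ : sphereLaplacian Θ θ = -(((d:ℝ) - 1) * Θ θ) := by
    have := heig θ hθ
    linarith
  -- final algebra
  have hX0 : 0 < Real.cosh (b * t) := hcosh t
  have hsh : Real.cosh (b * t) ^ 2 - Real.sinh (b * t) ^ 2 = 1 :=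
    Real.cosh_sq_sub_sinh_sq (b * t)
  have hΛd : Λ * ((p + 1) ^ 2 - 4) = 4 * ((d:ℝ) - 1) := by
    rw [hFS]; field_simp
  have hE2 : E * (p - 1) = -(p + 1) := by rw [hE]; field_simp
  have hb2 : b * b = Λ * (p - 1) ^ 2 / 4 := by
    rw [hb]; linear_combination ((p - 1) ^ 2 / 4) * hsq
  have hA2 : A ^ (p - 1) = (p + 1) * Λ / 2 := by
    rw [hA, ← Real.rpow_mul (by positivity), one_div,
        inv_mul_cancel₀ hp1.ne', Real.rpow_one]
  have hΨpE : Ψ t ^ (p - 1) * Real.cosh (b * t) ^ E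
      = ((p + 1) * Λ / 2) * Real.cosh (b * t) ^ (E - 1 - 1) := by
    rw [hΨs t, Real.mul_rpow hApos.le (Real.rpow_nonneg (hcosh t).le _),
        ← Real.rpow_mul (hcosh t).le, hA2, mul_assoc, ← Real.rpow_add (hcosh t),
        show -(2 / (p - 1)) * (p - 1) + E = E - 1 - 1 by field_simp; ring]
  have hY1 : Real.cosh (b * t) ^ E = Real.cosh (b * t) ^ (E - 1) * Real.cosh (b * t) := by
    rw [← Real.rpow_add_one hX0.ne' (E - 1)]; norm_num
  have hY0 : Real.cosh (b * t) ^ (E - 1)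
      = Real.cosh (b * t) ^ (E - 1 - 1) * Real.cosh (b * t) := by
    rw [← Real.rpow_add_one hX0.ne' (E - 1 - 1)]; norm_num
  rw [hlap, hlapΘ, hderiv2, hws t, hφs t]
  set X := Real.cosh (b * t) with hXdef
  set S := Real.sinh (b * t) with hSdef
  set Y := X ^ (E - 1 - 1) with hYdef
  set K := Θ θ with hKdef
  set D := ((d : ℝ)) with hDdef
  linear_combination (-(p * C * K)) * hΨpE
    + (C * K * (D - 1 + Λ)) * hY1
    + (C * K * X * (D - 1 + Λ - E * (b * b))) * hY0
    + (C * K * Y * E * (b * b) * (E - 1)) * hsh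
    + (C * K * Y * (E * (E - 1) - E * E * X ^ 2)) * hb2
    + (C * K * Y * (Λ / 4) * ((E * (p - 1) - 2 * p) - X ^ 2 * (E * (p - 1) - (p + 1)))) * hE2
    + (-(C * K * Y * X ^ 2 / 4)) * hΛd
end

section
/- Let Λ > 0, p > 1, and Ψ(t) = ((p+1)Λ/2)^{1/(p-1)}(cosh(√Λ(p-1)t/2))^{-2/(p-1)}. For s ∈ ℝ write Ψ_s(t) = Ψ(t-s). Then the map F : ℝ → ℝ, F(s) = ∫_ℝ Ψ(t)^p ∂_tΨ_s(t) dt, satisfies F(0) = 0 and F'(0) = -∫_ℝ Ψ(t)^p Ψ''(t) dt ≠ 0; in particular s = 0 is a nondegenerate zero of F. -/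
open Real MeasureTheory Filter Set

namespace Stmt14Aux

noncomputable def myf (c a q : ℝ) : ℝ → ℝ := fun t => c * Real.cosh (a*t) ^ (-q)
noncomputable def myf1 (c a q : ℝ) : ℝ → ℝ := fun t =>
  (-(c*q*a)) * (Real.sinh (a*t) * Real.cosh (a*t) ^ (-q-1))
noncomputable def myf2 (c a q : ℝ) : ℝ → ℝ := fun t =>
  (-(c*q*a^2)) * (Real.cosh (a*t) ^ (-q) -
    (q+1) * (Real.sinh (a*t) * Real.sinh (a*t)) * Real.cosh (a*t) ^ (-q-2))

lemma cosh_ne (x : ℝ) : Real.cosh x ≠ 0 := (Real.cosh_pos x).ne'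

lemma mul_rpow_sub_one {x : ℝ} (hx : 0 < x) (r : ℝ) : x * x ^ (r - 1) = x ^ r := by
  have h := Real.rpow_add hx 1 (r-1)
  rw [Real.rpow_one, show (1 + (r-1) : ℝ) = r by ring] at h
  exact h.symm

lemma hasDerivAt_myf (c a q t : ℝ) : HasDerivAt (myf c a q) (myf1 c a q t) t := by
  have h0 : HasDerivAt (fun t : ℝ => a*t) a t := by
    simpa using (hasDerivAt_id t).const_mul a
  have h1 : HasDerivAt (fun t : ℝ => Real.cosh (a*t)) (Real.sinh (a*t) * a) t :=
    (Real.hasDerivAt_cosh (a*t)).comp t h0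
  have h2 : HasDerivAt (fun t : ℝ => Real.cosh (a*t) ^ (-q))
      ((-q) * Real.cosh (a*t) ^ (-q-1) * (Real.sinh (a*t) * a)) t :=
    by have := (Real.hasDerivAt_rpow_const (p := -q) (Or.inl (cosh_ne (a*t)))).comp t h1; exact this
  have h3 : HasDerivAt (myf c a q) _ t := h2.const_mul c
  convert h3 using 1
  simp only [myf1]; ring

lemma hasDerivAt_myf1 (c a q t : ℝ) : HasDerivAt (myf1 c a q) (myf2 c a q t) t := by
  have h0 : HasDerivAt (fun t : ℝ => a*t) a t := by
    simpa using (hasDerivAt_id t).const_mul a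
  have hs : HasDerivAt (fun t : ℝ => Real.sinh (a*t)) (Real.cosh (a*t) * a) t :=
    (Real.hasDerivAt_sinh (a*t)).comp t h0
  have h1 : HasDerivAt (fun t : ℝ => Real.cosh (a*t)) (Real.sinh (a*t) * a) t :=
    (Real.hasDerivAt_cosh (a*t)).comp t h0
  have h2 : HasDerivAt (fun t : ℝ => Real.cosh (a*t) ^ (-q-1))
      ((-q-1) * Real.cosh (a*t) ^ (-q-1-1) * (Real.sinh (a*t) * a)) t :=
    by have := (Real.hasDerivAt_rpow_const (p := -q-1) (Or.inl (cosh_ne (a*t)))).comp t h1; exact this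
  have h3 : HasDerivAt (myf1 c a q) _ t :=
    (hs.mul h2).const_mul (-(c*q*a))
  convert h3 using 1
  have e1 : Real.cosh (a*t) * Real.cosh (a*t) ^ (-q-1) = Real.cosh (a*t) ^ (-q) := by
    have h := Real.rpow_add (Real.cosh_pos (a*t)) 1 (-q-1)
    rw [Real.rpow_one, show (1 + (-q-1) : ℝ) = -q by ring] at h
    exact h.symm
  have e2 : (-q-1-1 : ℝ) = -q-2 := by ring
  rw [e2]
  simp only [myf2]
  rw [← e1]
  ring

lemma cont_myf1 (c a q : ℝ) : Continuous (myf1 c a q) :=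
  continuous_iff_continuousAt.mpr fun t => (hasDerivAt_myf1 c a q t).continuousAt

lemma cont_myf2 (c a q : ℝ) : Continuous (myf2 c a q) := by
  have hc : Continuous fun t : ℝ => Real.cosh (a*t) :=
    Real.continuous_cosh.comp (continuous_const.mul continuous_id)
  have hs : Continuous fun t : ℝ => Real.sinh (a*t) :=
    Real.continuous_sinh.comp (continuous_const.mul continuous_id)
  exact continuous_const.mul
    (((hc.rpow_const fun t => Or.inl (cosh_ne _))).sub
      ((continuous_const.mul (hs.mul hs)).mul (hc.rpow_const fun t => Or.inl (cosh_ne _))))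

lemma my_exp_abs_int {b : ℝ} (hb : 0 < b) : Integrable (fun t : ℝ => Real.exp (-b*|t|)) := by
  have hf : IntegrableOn (fun t : ℝ => Real.exp (-b*|t|)) (Ioi 0) := by
    refine (exp_neg_integrableOn_Ioi 0 hb).congr_fun (fun x hx => ?_) measurableSet_Ioi
    rw [abs_of_pos hx]
  have int_Iic : IntegrableOn (fun t : ℝ => Real.exp (-b*|t|)) (Iic 0) := by
    rw [← Measure.map_neg_eq_self (volume : Measure ℝ)]
    have m : MeasurableEmbedding fun x : ℝ => -x := (Homeomorph.neg ℝ).measurableEmbedding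
    rw [m.integrableOn_map_iff]
    simp_rw [Function.comp_def, abs_neg, neg_preimage, neg_Iic, neg_zero]
    exact (integrableOn_Ici_iff_integrableOn_Ioi).mpr hf
  rw [← integrableOn_univ, ← Iic_union_Ioi (a := (0:ℝ))]
  exact integrableOn_union.mpr ⟨int_Iic, hf⟩

lemma my_abs_sinh_le_cosh (x : ℝ) : |Real.sinh x| ≤ Real.cosh x := by
  rw [abs_le]
  constructor
  · nlinarith [Real.cosh_add_sinh x, Real.exp_pos x]
  · nlinarith [Real.cosh_sub_sinh x, Real.exp_pos (-x)]

lemma my_exp_le_cosh (x : ℝ) : Real.exp |x| / 2 ≤ Real.cosh x := by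
  rw [← Real.cosh_abs x, Real.cosh_eq]
  nlinarith [Real.exp_pos (-|x|)]

lemma my_cosh_decay_bound {a m : ℝ} (ha : 0 ≤ a) (hm : 0 < m) (t : ℝ) :
    Real.cosh (a*t) ^ (-m) ≤ 2 ^ m * Real.exp (-(m*a)*|t|) := by
  have h1 : (0:ℝ) < Real.exp |a*t| / 2 := by positivity
  have h2 := Real.rpow_le_rpow_of_nonpos h1 (my_exp_le_cosh (a*t)) (neg_nonpos.mpr hm.le)
  refine h2.trans_eq ?_
  rw [Real.div_rpow (Real.exp_pos _).le (by norm_num), ← Real.exp_mul,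
    Real.rpow_neg (by norm_num), div_inv_eq_mul, abs_mul, abs_of_nonneg ha]
  rw [mul_comm]
  congr 1
  ring

lemma integrable_cosh_rpow {a m : ℝ} (ha : 0 < a) (hm : 0 < m) :
    Integrable (fun t : ℝ => Real.cosh (a*t) ^ (-m)) := by
  have hcont : Continuous fun t : ℝ => Real.cosh (a*t) ^ (-m) :=
    (Real.continuous_cosh.comp (continuous_const.mul continuous_id)).rpow_const
      (fun t => Or.inl (cosh_ne _))
  refine Integrable.mono' ((my_exp_abs_int (mul_pos hm ha)).const_mul (2^m))
    hcont.aestronglyMeasurable (ae_of_all _ fun t => ?_)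
  rw [Real.norm_eq_abs, abs_of_nonneg (Real.rpow_nonneg (Real.cosh_pos _).le _)]
  exact my_cosh_decay_bound ha.le hm t

lemma integrable_of_le_cosh {a m K : ℝ} {g : ℝ → ℝ} (ha : 0 < a) (hm : 0 < m)
    (hcont : Continuous g) (hbound : ∀ t, |g t| ≤ K * Real.cosh (a*t) ^ (-m)) :
    Integrable g := by
  refine Integrable.mono' ((integrable_cosh_rpow ha hm).const_mul K)
    hcont.aestronglyMeasurable (ae_of_all _ fun t => ?_)
  rw [Real.norm_eq_abs]
  exact hbound t

lemma abs_myf1_le {c a q : ℝ} (hc : 0 ≤ c) (hq : 0 ≤ q) (ha : 0 ≤ a) (t : ℝ) :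
    |myf1 c a q t| ≤ (c*q*a) * Real.cosh (a*t) ^ (-q) := by
  have hX : (0:ℝ) < Real.cosh (a*t) := Real.cosh_pos _
  have e1 : Real.cosh (a*t) * Real.cosh (a*t) ^ (-q-1) = Real.cosh (a*t) ^ (-q) :=
    mul_rpow_sub_one hX (-q)
  simp only [myf1, abs_mul, abs_neg]
  rw [abs_of_nonneg hc, abs_of_nonneg hq, abs_of_nonneg ha,
    abs_of_nonneg (Real.rpow_nonneg hX.le _)]
  rw [← e1]
  have h2 := mul_le_mul_of_nonneg_right (my_abs_sinh_le_cosh (a*t))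
    (Real.rpow_nonneg hX.le (-q-1))
  exact mul_le_mul_of_nonneg_left h2 (by positivity)

lemma abs_myf2_le {c a q : ℝ} (hc : 0 ≤ c) (hq : 0 ≤ q) (ha : 0 ≤ a) (t : ℝ) :
    |myf2 c a q t| ≤ (c*q*a^2*(q+2)) * Real.cosh (a*t) ^ (-q) := by
  have hX : (0:ℝ) < Real.cosh (a*t) := Real.cosh_pos _
  have eA : Real.cosh (a*t) * (Real.cosh (a*t) * Real.cosh (a*t) ^ (-q-2))
      = Real.cosh (a*t) ^ (-q) := by
    rw [show (-q-2 : ℝ) = (-q-1)-1 by ring, mul_rpow_sub_one hX (-q-1),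
      mul_rpow_sub_one hX (-q)]
  have hsinh : Real.sinh (a*t) * Real.sinh (a*t) ≤ Real.cosh (a*t) * Real.cosh (a*t) := by
    have h := my_abs_sinh_le_cosh (a*t)
    nlinarith [abs_nonneg (Real.sinh (a*t)), le_abs_self (Real.sinh (a*t)),
      neg_abs_le (Real.sinh (a*t))]
  have hB : (q+1) * (Real.sinh (a*t) * Real.sinh (a*t)) * Real.cosh (a*t) ^ (-q-2)
      ≤ (q+1) * Real.cosh (a*t) ^ (-q) := by
    rw [← eA]
    have := mul_le_mul_of_nonneg_right hsinh (Real.rpow_nonneg hX.le (-q-2))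
    nlinarith [Real.rpow_nonneg hX.le (-q-2)]
  have hBnn : 0 ≤ (q+1) * (Real.sinh (a*t) * Real.sinh (a*t)) * Real.cosh (a*t) ^ (-q-2) := by
    have := mul_self_nonneg (Real.sinh (a*t))
    have := Real.rpow_nonneg hX.le (-q-2)
    positivity
  have hAnn : (0:ℝ) ≤ Real.cosh (a*t) ^ (-q) := Real.rpow_nonneg hX.le _
  simp only [myf2, abs_mul, abs_neg]
  rw [abs_of_nonneg hc, abs_of_nonneg hq, abs_of_nonneg (sq_nonneg a)]
  have habs : |Real.cosh (a*t) ^ (-q) -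
      (q+1) * (Real.sinh (a*t) * Real.sinh (a*t)) * Real.cosh (a*t) ^ (-q-2)|
      ≤ (q+2) * Real.cosh (a*t) ^ (-q) := by
    rw [abs_le]
    constructor <;> nlinarith
  refine le_trans (mul_le_mul_of_nonneg_left habs (by positivity)) (le_of_eq (by ring))

end Stmt14Aux
open Real MeasureTheory Filter Set Topology Stmt14Aux in
/-- `s = 0` is a nondegenerate zero of `F(s) = ∫ Ψ(t)^p ∂_tΨ(t-s) dt`:
`F(0) = 0` and `F'(0) = -∫ Ψ^p Ψ'' ≠ 0`. -/
theorem stmt14 (Λ p : ℝ) (hΛ : 0 < Λ) (hp : 1 < p)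
    (Ψ : ℝ → ℝ)
    (hΨ : Ψ = fun t => ((p + 1) * Λ / 2) ^ (1 / (p - 1)) *
      Real.cosh (Real.sqrt Λ * (p - 1) * t / 2) ^ (-(2 / (p - 1))))
    (F : ℝ → ℝ) (hF : F = fun s => ∫ t : ℝ, Ψ t ^ p * deriv Ψ (t - s)) :
    F 0 = 0 ∧
    HasDerivAt F (-∫ t : ℝ, Ψ t ^ p * deriv (deriv Ψ) t) 0 ∧
    (-∫ t : ℝ, Ψ t ^ p * deriv (deriv Ψ) t) ≠ 0 := by
  have hp1 : (0:ℝ) < p - 1 := by linarith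
  have hp0 : (0:ℝ) < p := by linarith
  set c : ℝ := ((p + 1) * Λ / 2) ^ (1 / (p - 1)) with hcdef
  set a : ℝ := Real.sqrt Λ * (p - 1) / 2 with hadef
  set q : ℝ := 2 / (p - 1) with hqdef
  have hsq : 0 < Real.sqrt Λ := Real.sqrt_pos.mpr hΛ
  have ha : 0 < a := by rw [hadef]; positivity
  have hq : 0 < q := by rw [hqdef]; positivity
  have hc : 0 < c := by rw [hcdef]; apply Real.rpow_pos_of_pos; nlinarith
  have hKa : 0 < c*q*a := mul_pos (mul_pos hc hq) ha
  have hM : 0 < c*q*a^2*(q+2) := by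
    have := pow_pos ha 2
    have : 0 < c*q*a^2 := mul_pos (mul_pos hc hq) this
    nlinarith
  have hΨf : Ψ = myf c a q := by
    funext t
    rw [hΨ]
    simp only [myf]
    rw [show Real.sqrt Λ * (p - 1) * t / 2 = a * t by rw [hadef]; ring]
  -- derivatives
  have hder : ∀ t, HasDerivAt Ψ (myf1 c a q t) t := fun t => hΨf ▸ hasDerivAt_myf c a q t
  have hd1 : deriv Ψ = myf1 c a q := funext fun t => (hder t).deriv
  have hd2 : deriv (deriv Ψ) = myf2 c a q := by
    rw [hd1]; exact funext fun t => (hasDerivAt_myf1 c a q t).deriv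
  -- basic facts
  have hΨpos : ∀ t, 0 < Ψ t := fun t => by
    rw [hΨf]; exact mul_pos hc (Real.rpow_pos_of_pos (Real.cosh_pos _) _)
  have hcosh_le1 : ∀ t : ℝ, Real.cosh (a*t) ^ (-q) ≤ 1 := fun t =>
    Real.rpow_le_one_of_one_le_of_nonpos (Real.one_le_cosh _) (neg_nonpos.mpr hq.le)
  have hΨle : ∀ t, Ψ t ≤ c := fun t => by
    rw [hΨf]
    calc c * Real.cosh (a*t) ^ (-q) ≤ c * 1 :=
          mul_le_mul_of_nonneg_left (hcosh_le1 t) hc.le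
      _ = c := mul_one c
  have hΨp_eq : ∀ t, Ψ t ^ p = c ^ p * Real.cosh (a*t) ^ (-(q*p)) := fun t => by
    rw [hΨf]
    show (c * Real.cosh (a*t) ^ (-q)) ^ p = _
    rw [Real.mul_rpow hc.le (Real.rpow_nonneg (Real.cosh_pos _).le _),
      show (-(q*p) : ℝ) = (-q) * p by ring, Real.rpow_mul (Real.cosh_pos _).le]
  have hΨp_le : ∀ t, Ψ t ^ p ≤ c ^ p := fun t =>
    Real.rpow_le_rpow (hΨpos t).le (hΨle t) hp0.le
  have hΨp1_le : ∀ t, Ψ t ^ (p-1) ≤ c ^ (p-1) := fun t =>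
    Real.rpow_le_rpow (hΨpos t).le (hΨle t) hp1.le
  have hΨp_pos : ∀ t, 0 < Ψ t ^ p := fun t => Real.rpow_pos_of_pos (hΨpos t) p
  have hΨcont : Continuous Ψ := by
    rw [hΨf]
    exact continuous_iff_continuousAt.mpr fun t => (hasDerivAt_myf c a q t).continuousAt
  have hΨpcont : Continuous fun t => Ψ t ^ p :=
    hΨcont.rpow_const fun t => Or.inl (hΨpos t).ne'
  have habsf2 : ∀ x : ℝ, |myf2 c a q x| ≤ c*q*a^2*(q+2) := fun x => by
    refine (abs_myf2_le hc.le hq.le ha.le x).trans ?_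
    calc (c*q*a^2*(q+2)) * Real.cosh (a*x) ^ (-q) ≤ (c*q*a^2*(q+2)) * 1 :=
          mul_le_mul_of_nonneg_left (hcosh_le1 x) hM.le
      _ = _ := mul_one _
  -- a common bound
  have hGbd : ∀ t : ℝ, |Ψ t ^ p * myf1 c a q t|
      ≤ (c^p * (c*q*a)) * Real.cosh (a*t) ^ (-q) := fun t => by
    rw [abs_mul, abs_of_nonneg (hΨp_pos t).le]
    calc Ψ t ^ p * |myf1 c a q t|
        ≤ c^p * ((c*q*a) * Real.cosh (a*t) ^ (-q)) :=
          mul_le_mul (hΨp_le t) (abs_myf1_le hc.le hq.le ha.le t) (abs_nonneg _)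
            (Real.rpow_nonneg hc.le p)
      _ = (c^p * (c*q*a)) * Real.cosh (a*t) ^ (-q) := by ring
  have hint_g0 : Integrable (fun t => Ψ t ^ p * myf1 c a q t) :=
    integrable_of_le_cosh ha hq (hΨpcont.mul (cont_myf1 c a q)) hGbd
  -- Part 1 : F 0 = 0
  have hF0 : F 0 = 0 := by
    have heq : F 0 = ∫ t : ℝ, Ψ t ^ p * myf1 c a q t := by
      rw [hF, hd1]; simp only [sub_zero]
    have hodd : ∀ t : ℝ, Ψ (-t) ^ p * myf1 c a q (-t) = -(Ψ t ^ p * myf1 c a q t) := by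
      intro t
      rw [hΨf]
      simp only [myf, myf1, mul_neg, Real.cosh_neg, Real.sinh_neg]
      ring
    have h2 : ∫ t : ℝ, Ψ (-t) ^ p * myf1 c a q (-t) = ∫ t : ℝ, Ψ t ^ p * myf1 c a q t :=
      integral_neg_eq_self (fun t => Ψ t ^ p * myf1 c a q t) volume
    simp_rw [hodd] at h2
    rw [integral_neg] at h2
    rw [heq]; linarith
  -- Part 2 : derivative of F at 0
  have key := hasDerivAt_integral_of_dominated_loc_of_deriv_le (μ := volume) (x₀ := (0:ℝ))
    (s := Metric.ball 0 1) (F := fun s t => Ψ t ^ p * myf1 c a q (t - s))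
    (F' := fun s t => Ψ t ^ p * (myf2 c a q (t - s) * (-1)))
    (bound := fun t => c^p * Real.cosh (a*t) ^ (-(q*p)) * (c*q*a^2*(q+2)))
    (Metric.ball_mem_nhds 0 one_pos)
    (Eventually.of_forall fun s =>
      (hΨpcont.mul ((cont_myf1 c a q).comp (continuous_id.sub continuous_const))).aestronglyMeasurable)
    (by simpa using hint_g0)
    ((hΨpcont.mul (((cont_myf2 c a q).comp
      (continuous_id.sub (continuous_const (y := (0:ℝ))))).mul (continuous_const (y := (-1:ℝ))))).aestronglyMeasurable)
    (ae_of_all _ fun t s hs => by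
      rw [Real.norm_eq_abs, abs_mul, abs_mul, abs_neg, abs_one, mul_one,
        abs_of_nonneg (hΨp_pos t).le]
      calc Ψ t ^ p * |myf2 c a q (t - s)| ≤ Ψ t ^ p * (c*q*a^2*(q+2)) :=
            mul_le_mul_of_nonneg_left (habsf2 (t - s)) (hΨp_pos t).le
        _ = c^p * Real.cosh (a*t) ^ (-(q*p)) * (c*q*a^2*(q+2)) := by rw [hΨp_eq t])
    (((integrable_cosh_rpow ha (mul_pos hq hp0)).const_mul (c^p)).mul_const _)
    (ae_of_all _ fun t s hs => by
      have hinner : HasDerivAt (fun s : ℝ => t - s) (-1) s := (hasDerivAt_id s).const_sub t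
      exact ((hasDerivAt_myf1 c a q (t - s)).comp s hinner).const_mul (Ψ t ^ p))
  have hval : (∫ t : ℝ, Ψ t ^ p * (myf2 c a q (t - 0) * (-1)))
      = -∫ t : ℝ, Ψ t ^ p * myf2 c a q t := by
    simp only [sub_zero, mul_neg, mul_one, integral_neg]
  have hkey2 : HasDerivAt F (-∫ t : ℝ, Ψ t ^ p * myf2 c a q t) 0 := by
    rw [hF, hd1]
    exact hval ▸ key.2
  -- Part 3 : the value is nonzero
  set G' : ℝ → ℝ := fun t =>
    (myf1 c a q t * p * Ψ t ^ (p-1)) * myf1 c a q t + Ψ t ^ p * myf2 c a q t with hG'def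
  have hG : ∀ t, HasDerivAt (fun t => Ψ t ^ p * myf1 c a q t) (G' t) t := fun t =>
    ((hder t).rpow_const (Or.inr hp.le)).mul (hasDerivAt_myf1 c a q t)
  have hΨp1cont : Continuous fun t => Ψ t ^ (p-1) :=
    hΨcont.rpow_const fun t => Or.inl (hΨpos t).ne'
  have hint1 : Integrable (fun t => (myf1 c a q t * p * Ψ t ^ (p-1)) * myf1 c a q t) := by
    refine integrable_of_le_cosh (K := (c*q*a) * p * c^(p-1) * (c*q*a)) ha hq
      ((((cont_myf1 c a q).mul continuous_const).mul hΨp1cont).mul (cont_myf1 c a q))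
      (fun t => ?_)
    have h1 : |myf1 c a q t| ≤ (c*q*a) * Real.cosh (a*t) ^ (-q) :=
      abs_myf1_le hc.le hq.le ha.le t
    have h2 : |myf1 c a q t| ≤ c*q*a := by
      refine h1.trans ?_
      calc (c*q*a) * Real.cosh (a*t) ^ (-q) ≤ (c*q*a) * 1 :=
            mul_le_mul_of_nonneg_left (hcosh_le1 t) hKa.le
        _ = c*q*a := mul_one _
    rw [abs_mul, abs_mul, abs_mul, abs_of_pos hp0,
      abs_of_nonneg (Real.rpow_nonneg (hΨpos t).le _)]
    have s1 : |myf1 c a q t| * p ≤ (c*q*a) * p := mul_le_mul_of_nonneg_right h2 hp0.le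
    have s2 : |myf1 c a q t| * p * Ψ t ^ (p-1) ≤ (c*q*a) * p * c^(p-1) :=
      mul_le_mul s1 (hΨp1_le t) (Real.rpow_nonneg (hΨpos t).le _)
        (mul_nonneg hKa.le hp0.le)
    calc |myf1 c a q t| * p * Ψ t ^ (p-1) * |myf1 c a q t|
        ≤ ((c*q*a) * p * c^(p-1)) * ((c*q*a) * Real.cosh (a*t) ^ (-q)) :=
          mul_le_mul s2 h1 (abs_nonneg _)
            (mul_nonneg (mul_nonneg hKa.le hp0.le) (Real.rpow_nonneg hc.le _))
      _ = (c*q*a) * p * c^(p-1) * (c*q*a) * Real.cosh (a*t) ^ (-q) := by ring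
  have hint2 : Integrable (fun t => Ψ t ^ p * myf2 c a q t) := by
    refine integrable_of_le_cosh (K := c^p * (c*q*a^2*(q+2))) ha hq
      (hΨpcont.mul (cont_myf2 c a q)) (fun t => ?_)
    rw [abs_mul, abs_of_nonneg (hΨp_pos t).le]
    calc Ψ t ^ p * |myf2 c a q t|
        ≤ c^p * ((c*q*a^2*(q+2)) * Real.cosh (a*t) ^ (-q)) :=
          mul_le_mul (hΨp_le t) (abs_myf2_le hc.le hq.le ha.le t) (abs_nonneg _)
            (Real.rpow_nonneg hc.le p)
      _ = (c^p * (c*q*a^2*(q+2))) * Real.cosh (a*t) ^ (-q) := by ring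
  -- limits of G at ±∞
  have hexp_le : ∀ t : ℝ, Real.exp (a*t) / 2 ≤ Real.cosh (a*t) := fun t => by
    have h1 := my_exp_le_cosh (a*t)
    have h2 : Real.exp (a*t) ≤ Real.exp |a*t| := Real.exp_le_exp.mpr (le_abs_self _)
    linarith
  have hexp_le' : ∀ t : ℝ, Real.exp (-(a*t)) / 2 ≤ Real.cosh (a*t) := fun t => by
    have h1 := my_exp_le_cosh (a*t)
    have h2 : Real.exp (-(a*t)) ≤ Real.exp |a*t| := Real.exp_le_exp.mpr (neg_le_abs _)
    linarith
  have hcoshT : Tendsto (fun t : ℝ => Real.cosh (a*t)) atTop atTop := by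
    refine tendsto_atTop_mono hexp_le ?_
    exact (Real.tendsto_exp_atTop.comp (Tendsto.const_mul_atTop ha tendsto_id)).atTop_div_const
      two_pos
  have hcoshB : Tendsto (fun t : ℝ => Real.cosh (a*t)) atBot atTop := by
    refine tendsto_atTop_mono hexp_le' ?_
    have hneg : Tendsto (fun t : ℝ => -(a*t)) atBot atTop :=
      tendsto_neg_atBot_atTop.comp (Tendsto.const_mul_atBot ha tendsto_id)
    exact (Real.tendsto_exp_atTop.comp hneg).atTop_div_const two_pos
  have hGT : Tendsto (fun t => Ψ t ^ p * myf1 c a q t) atTop (𝓝 0) := by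
    refine squeeze_zero_norm (fun t => (Real.norm_eq_abs _).trans_le (hGbd t)) ?_
    have := ((tendsto_rpow_neg_atTop hq).comp hcoshT).const_mul (c^p * (c*q*a))
    simpa using this
  have hGB : Tendsto (fun t => Ψ t ^ p * myf1 c a q t) atBot (𝓝 0) := by
    refine squeeze_zero_norm (fun t => (Real.norm_eq_abs _).trans_le (hGbd t)) ?_
    have := ((tendsto_rpow_neg_atTop hq).comp hcoshB).const_mul (c^p * (c*q*a))
    simpa using this
  have hFTC : ∫ t : ℝ, G' t = 0 - 0 :=
    integral_of_hasDerivAt_of_tendsto hG (hint1.add hint2) hGB hGT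
  rw [hG'def] at hFTC
  rw [integral_add hint1 hint2] at hFTC
  have hterm1nn : 0 ≤ fun t => (myf1 c a q t * p * Ψ t ^ (p-1)) * myf1 c a q t := by
    intro t
    simp only [Pi.zero_apply]
    show (0:ℝ) ≤ (myf1 c a q t * p * Ψ t ^ (p-1)) * myf1 c a q t
    have h : (myf1 c a q t * p * Ψ t ^ (p-1)) * myf1 c a q t
        = p * Ψ t ^ (p-1) * (myf1 c a q t * myf1 c a q t) := by ring
    rw [h]
    exact mul_nonneg (mul_nonneg hp0.le (Real.rpow_nonneg (hΨpos t).le _))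
      (mul_self_nonneg _)
  have hsupp : Ioi (0:ℝ) ⊆ Function.support
      (fun t => (myf1 c a q t * p * Ψ t ^ (p-1)) * myf1 c a q t) := by
    intro t ht
    have hf1ne : myf1 c a q t ≠ 0 := by
      simp only [myf1]
      refine mul_ne_zero (neg_ne_zero.mpr hKa.ne') (mul_ne_zero ?_ ?_)
      · intro h
        exact (mul_pos ha ht).ne' (Real.sinh_eq_zero.mp h)
      · exact (Real.rpow_pos_of_pos (Real.cosh_pos _) _).ne'
    have h : (myf1 c a q t * p * Ψ t ^ (p-1)) * myf1 c a q t
        = p * Ψ t ^ (p-1) * (myf1 c a q t * myf1 c a q t) := by ring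
    have hpos : 0 < (myf1 c a q t * p * Ψ t ^ (p-1)) * myf1 c a q t := by
      rw [h]
      exact mul_pos (mul_pos hp0 (Real.rpow_pos_of_pos (hΨpos t) _)) (mul_self_pos.mpr hf1ne)
    exact hpos.ne'
  have hpos1 : 0 < ∫ t : ℝ, (myf1 c a q t * p * Ψ t ^ (p-1)) * myf1 c a q t := by
    rw [integral_pos_iff_support_of_nonneg hterm1nn hint1]
    refine lt_of_lt_of_le ?_ (measure_mono hsupp)
    rw [Real.volume_Ioi]
    exact ENNReal.zero_lt_top
  have hne : (-∫ t : ℝ, Ψ t ^ p * myf2 c a q t) ≠ 0 := by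
    have : -∫ t : ℝ, Ψ t ^ p * myf2 c a q t
        = ∫ t : ℝ, (myf1 c a q t * p * Ψ t ^ (p-1)) * myf1 c a q t := by linarith
    rw [this]
    exact hpos1.ne'
  refine ⟨hF0, ?_, ?_⟩
  · rw [hd2]; exact hkey2
  · rw [hd2]; exact hne
end
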